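/- Let S be a finite semigroup that is a left regular band of groups, with idempotent-power map ω. Then for all s, t ∈ S, ω((ω s)·t) = (ω s)·(ω t). -/
import Mathlib

private def spow {S : Type*} [Semigroup S] (s : S) : ℕ → S
  | 0 => s
  | n + 1 => spow s n * s

private lemma spow_iter {S : Type*} [Semigroup S] (s : S) (n : ℕ) :
    (fun t => t * s)^[n] s = spow s n := by
  induction n with
  | zero => rfl
  | succ k ih => rw [Function.iterate_succ_apply', ih]; rfl

private lemma spow_add {S : Type*} [Semigroup S] (s : S) (a b : ℕ) :
    spow s a * spow s b = spow s (a + b + 1) := by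
  induction b with
  | zero => rfl
  | succ k ih =>
    show spow s a * (spow s k * s) = spow s (a + k + 1) * s
    rw [← mul_assoc, ih]

private lemma spow_idem_const {S : Type*} [Semigroup S] {x : S} (hx : x * x = x) (n : ℕ) :
    spow x n = x := by
  induction n with
  | zero => rfl
  | succ k ih => show spow x k * x = x; rw [ih, hx]

private lemma spow_stable {S : Type*} [Semigroup S] {s : S} {n : ℕ}
    (h : spow s n * spow s n = spow s n) (k : ℕ) :
    spow s (n + k * (n + 1)) = spow s n := by
  induction k with
  | zero => norm_num
  | succ j ih =>
    have : n + (j + 1) * (n + 1) = (n + j * (n + 1)) + n + 1 := by ring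
    rw [this, ← spow_add, ih, h]

private lemma spow_mul_left {S : Type*} [Semigroup S] {e t : S}
    (hc : ∀ a : S, e * a * e = e * a) (k : ℕ) :
    spow (e * t) k = e * spow t k := by
  induction k with
  | zero => rfl
  | succ j ih =>
    show spow (e * t) j * (e * t) = e * spow t (j + 1)
    rw [ih, ← mul_assoc, hc, mul_assoc]
    rfl

/-- In a finite LRBG, `((ω s)·t)^ω = (ω s)·(ω t)` for all `s, t`. -/
theorem lrbg_omega_of_omega_mul {S : Type*} [Semigroup S] [Fintype S] (ω : S → S)
    (hidem : ∀ s : S, ω s * ω s = ω s)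
    (hpow : ∀ s : S, ∃ n : ℕ, ω s = (fun t => t * s)^[n] s)
    (lrbg1 : ∀ s : S, ω s * s = s)
    (lrbg2 : ∀ s t : S, s * t * ω s = s * t) :
    ∀ s t : S, ω (ω s * t) = ω s * ω t := by
  intro s t
  set e := ω s with he_def
  have he : e * e = e := hidem s
  have hωe : ω e = e := by
    obtain ⟨n, hn⟩ := hpow e
    rw [spow_iter] at hn
    rw [hn, spow_idem_const he]
  have hc : ∀ a : S, e * a * e = e * a := by
    intro a
    have := lrbg2 e a
    rwa [hωe] at this
  obtain ⟨n, hn⟩ := hpow (e * t)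
  rw [spow_iter] at hn
  obtain ⟨m, hm⟩ := hpow t
  rw [spow_iter] at hm
  have hiu : spow (e * t) n * spow (e * t) n = spow (e * t) n := by
    rw [← hn]; exact hidem (e * t)
  have hit : spow t m * spow t m = spow t m := by
    rw [← hm]; exact hidem t
  calc ω (e * t) = spow (e * t) n := hn
    _ = spow (e * t) (n + m * (n + 1)) := (spow_stable hiu m).symm
    _ = e * spow t (n + m * (n + 1)) := spow_mul_left hc _
    _ = e * spow t (m + n * (m + 1)) := by congr 1; ring
    _ = e * spow t m := by rw [spow_stable hit n]
    _ = e * ω t := by rw [hm]
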